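/- Let ≿ be a complete transitive continuous betweenness relation on compact convex X with x* ≻ x_*, and fix t ∈ (0,1). For x ∈ X, the value v_t^P(x) of any separating affine functional (normalized by v_t^P(x*)=1, v_t^P(x_*)=0) on the affine hull of a polytope P containing {x*, x_*, x} does not depend on the choice of P. That is, if P and Q are two such polytopes with normalized separating functionals v_t^P and v_t^Q, then v_t^P(x) = v_t^Q(x). -/

import Mathlib

open Set

theorem local_utility_independent_of_polytope
    {E : Type*} [AddCommGroup E] [Module ℝ E] [TopologicalSpace E]
    [IsTopologicalAddGroup E] [ContinuousSMul ℝ E] [T2Space E]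
    (X : Set E) (hXconv : Convex ℝ X) (hXcomp : IsCompact X)
    (r : E → E → Prop)
    (hcomp : ∀ x ∈ X, ∀ y ∈ X, r x y ∨ r y x)
    (htrans : ∀ x ∈ X, ∀ y ∈ X, ∀ z ∈ X, r x y → r y z → r x z)
    (hclosed : ∀ y ∈ X, IsClosed {x ∈ X | r x y} ∧ IsClosed {x ∈ X | r y x})
    (hbet : ∀ x ∈ X, ∀ y ∈ X, ∀ l ∈ Ioo (0:ℝ) 1,
      (r x y ∧ ¬ r y x) →
        ((r x (l • x + (1 - l) • y) ∧ ¬ r (l • x + (1 - l) • y) x) ∧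
         (r (l • x + (1 - l) • y) y ∧ ¬ r y (l • x + (1 - l) • y))))
    (xstar xlow : E) (hxstar : xstar ∈ X) (hxlow : xlow ∈ X)
    (hbest : ∀ x ∈ X, r xstar x) (hworst : ∀ x ∈ X, r x xlow)
    (hstrict : r xstar xlow ∧ ¬ r xlow xstar)
    (t : ℝ) (ht : t ∈ Ioo (0:ℝ) 1) (x : E) (hx : x ∈ X)
    (sP sQ : Finset E) (P Q : Set E)
    (hP : P = convexHull ℝ (sP : Set E)) (hQ : Q = convexHull ℝ (sQ : Set E))
    (hPX : P ⊆ X) (hQX : Q ⊆ X)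
    (hxstarP : xstar ∈ P) (hxlowP : xlow ∈ P) (hxP : x ∈ P)
    (hxstarQ : xstar ∈ Q) (hxlowQ : xlow ∈ Q) (hxQ : x ∈ Q)
    (v w : E →ᵃ[ℝ] ℝ)
    (hv1 : v xstar = 1) (hv0 : v xlow = 0)
    (hw1 : w xstar = 1) (hw0 : w xlow = 0)
    (hvrep : ∀ y ∈ P,
      (r y (t • xstar + (1 - t) • xlow) ↔ v y ≥ v (t • xstar + (1 - t) • xlow)) ∧
      ((r y (t • xstar + (1 - t) • xlow) ∧ ¬ r (t • xstar + (1 - t) • xlow) y) ↔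
        v y > v (t • xstar + (1 - t) • xlow)))
    (hwrep : ∀ y ∈ Q,
      (r y (t • xstar + (1 - t) • xlow) ↔ w y ≥ w (t • xstar + (1 - t) • xlow)) ∧
      ((r y (t • xstar + (1 - t) • xlow) ∧ ¬ r (t • xstar + (1 - t) • xlow) y) ↔
        w y > w (t • xstar + (1 - t) • xlow))) :
    v x = w x := by
  obtain ⟨ht0, ht1⟩ := ht
  set m : E := t • xstar + (1 - t) • xlow with hm
  have hmX : m ∈ X := hXconv hxstar hxlow (le_of_lt ht0) (by linarith) (by ring)
  have hPconv : Convex ℝ P := hP ▸ convex_convexHull ℝ _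
  have hQconv : Convex ℝ Q := hQ ▸ convex_convexHull ℝ _
  have hvm : v m = t := by
    rw [hm, Convex.combo_affine_apply (by ring), hv1, hv0]
    simp
  have hwm : w m = t := by
    rw [hm, Convex.combo_affine_apply (by ring), hw1, hw0]
    simp
  have key : ∀ c, c ∈ P → c ∈ Q →
      (∃ μ₁ ∈ Icc (0:ℝ) 1, r (μ₁ • x + (1-μ₁) • c) m) →
      (∃ μ₂ ∈ Icc (0:ℝ) 1, r m (μ₂ • x + (1-μ₂) • c)) →
      ∃ μ ∈ Icc (0:ℝ) 1, μ * v x + (1-μ) * v c = t ∧ μ * w x + (1-μ) * w c = t := by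
    rintro c hcP hcQ ⟨μ₁, hμ₁, h1⟩ ⟨μ₂, hμ₂, h2⟩
    set z : ℝ → E := fun μ => μ • x + (1-μ) • c with hz
    have hzcont : Continuous z := by
      apply Continuous.add
      · exact (continuous_id.smul continuous_const)
      · exact ((continuous_const.sub continuous_id).smul continuous_const)
    have hzP : ∀ μ ∈ Icc (0:ℝ) 1, z μ ∈ P := fun μ hμ =>
      hPconv hxP hcP hμ.1 (by linarith [hμ.2]) (by ring)
    have hzQ : ∀ μ ∈ Icc (0:ℝ) 1, z μ ∈ Q := fun μ hμ =>
      hQconv hxQ hcQ hμ.1 (by linarith [hμ.2]) (by ring)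
    have hzX : ∀ μ ∈ Icc (0:ℝ) 1, z μ ∈ X := fun μ hμ => hPX (hzP μ hμ)
    have hA : IsClosed {y ∈ X | r y m} := (hclosed m hmX).1
    have hB : IsClosed {y ∈ X | r m y} := (hclosed m hmX).2
    have hcover : Icc (0:ℝ) 1 ⊆ z ⁻¹' {y ∈ X | r y m} ∪ z ⁻¹' {y ∈ X | r m y} := by
      intro μ hμ
      rcases hcomp (z μ) (hzX μ hμ) m hmX with h | h
      · exact Or.inl ⟨hzX μ hμ, h⟩
      · exact Or.inr ⟨hzX μ hμ, h⟩
    have := isPreconnected_closed_iff.mp (isPreconnected_Icc (a := (0:ℝ)) (b := 1))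
      (z ⁻¹' {y ∈ X | r y m}) (z ⁻¹' {y ∈ X | r m y})
      (hA.preimage hzcont) (hB.preimage hzcont) hcover
      ⟨μ₁, hμ₁, hzX μ₁ hμ₁, h1⟩ ⟨μ₂, hμ₂, hzX μ₂ hμ₂, h2⟩
    obtain ⟨μ, hμ, ⟨_, hr1⟩, ⟨_, hr2⟩⟩ := this
    have hvz : v (z μ) = t := by
      have hge : v (z μ) ≥ v m := ((hvrep (z μ) (hzP μ hμ)).1).mp hr1
      have hngt : ¬ v (z μ) > v m := fun hgt =>
        (((hvrep (z μ) (hzP μ hμ)).2).mpr hgt).2 hr2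
      rw [← hvm]; exact le_antisymm (not_lt.mp hngt) hge
    have hwz : w (z μ) = t := by
      have hge : w (z μ) ≥ w m := ((hwrep (z μ) (hzQ μ hμ)).1).mp hr1
      have hngt : ¬ w (z μ) > w m := fun hgt =>
        (((hwrep (z μ) (hzQ μ hμ)).2).mpr hgt).2 hr2
      rw [← hwm]; exact le_antisymm (not_lt.mp hngt) hge
    refine ⟨μ, hμ, ?_, ?_⟩
    · rw [← hvz, hz]; simp [Convex.combo_affine_apply (by ring : μ + (1-μ) = 1)]
    · rw [← hwz, hz]; simp [Convex.combo_affine_apply (by ring : μ + (1-μ) = 1)]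
  rcases hcomp x hx m hmX with hxm | hmx
  · obtain ⟨μ, hμ, hveq, hweq⟩ := key xlow hxlowP hxlowQ
      ⟨1, ⟨zero_le_one, le_refl 1⟩, by simpa using hxm⟩
      ⟨0, ⟨le_refl 0, zero_le_one⟩, by simpa using hworst m hmX⟩
    rw [hv0] at hveq; rw [hw0] at hweq
    have hμ0 : μ ≠ 0 := by rintro rfl; simp at hveq; linarith
    have : μ * v x = μ * w x := by linarith
    exact mul_left_cancel₀ hμ0 this
  · obtain ⟨μ, hμ, hveq, hweq⟩ := key xstar hxstarP hxstarQ
      ⟨0, ⟨le_refl 0, zero_le_one⟩, by simpa using hbest m hmX⟩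
      ⟨1, ⟨zero_le_one, le_refl 1⟩, by simpa using hmx⟩
    rw [hv1] at hveq; rw [hw1] at hweq
    have hμ0 : μ ≠ 0 := by rintro rfl; simp at hveq; linarith
    have : μ * v x = μ * w x := by linarith
    exact mul_left_cancel₀ hμ0 this
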